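/- Let ε ∈ Σ be a sequence whose head is (ε₀, ε₁, ε₂, …) = (+1, -1, -1, -1, …). Then the derivative of the function b ↦ (p - q)(ε)(2, b) at b = 0 equals 1/(2ε₋₂). -/

import Mathlib

open Filter Topology

/-- Depth-`k` truncation of the continued fraction
`r_n(ε)(a,b) = 1/(aε_n + b/(aε_{n+1} + b/(aε_{n+2} + ⋯)))`. -/
noncomputable def rTrunc (a b : ℝ) (ε : ℤ → ℝ) : ℕ → ℤ → ℝ
  | 0, n => 1 / (a * ε n)
  | k + 1, n => 1 / (a * ε n + b * rTrunc a b ε k (n + 1))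

/-- The continued fraction `r_n(ε)(a,b)`, as the limit of its finite truncations. -/
noncomputable def rCF (a b : ℝ) (ε : ℤ → ℝ) (n : ℤ) : ℝ :=
  limUnder atTop (fun k => rTrunc a b ε k n)

/-- Depth-`k` truncation of the continued fraction
`s_n(ε)(a,b) = 1/(-aε_n + b/(-aε_{n-1} + b/(-aε_{n-2} + ⋯)))`. -/
noncomputable def sTrunc (a b : ℝ) (ε : ℤ → ℝ) : ℕ → ℤ → ℝ
  | 0, n => 1 / (-(a * ε n))
  | k + 1, n => 1 / (-(a * ε n) + b * sTrunc a b ε k (n - 1))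

/-- The continued fraction `s_n(ε)(a,b)`, as the limit of its finite truncations. -/
noncomputable def sCF (a b : ℝ) (ε : ℤ → ℝ) (n : ℤ) : ℝ :=
  limUnder atTop (fun k => sTrunc a b ε k n)

/-- `p(ε)(a,b) = 1 - b s₋₂ + b² s₋₂s₋₃ - b³ s₋₂s₋₃s₋₄ + ⋯`. -/
noncomputable def pFun (a b : ℝ) (ε : ℤ → ℝ) : ℝ :=
  ∑' k : ℕ, (-b) ^ k * ∏ j ∈ Finset.range k, sCF a b ε (-2 - (j : ℤ))

/-- `q(ε)(a,b) = r₀ - r₀r₁ + r₀r₁r₂ - ⋯`. -/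
noncomputable def qFun (a b : ℝ) (ε : ℤ → ℝ) : ℝ :=
  ∑' n : ℕ, (-1 : ℝ) ^ n * ∏ j ∈ Finset.range (n + 1), rCF a b ε (j : ℤ)

/-! ### Auxiliary lemmas -/

lemma eps_abs {ε : ℤ → ℝ} (hε : ∀ n : ℤ, ε n = 1 ∨ ε n = -1) (n : ℤ) : |ε n| = 1 := by
  rcases hε n with h | h <;> rw [h] <;> norm_num

lemma denom_lb {e b t : ℝ} (he : |e| = 2) (hb : |b| ≤ 1/2) (ht : |t| ≤ 2/3) :
    5/3 ≤ |e + b * t| := by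
  have h1 : |b * t| ≤ 1/3 := by
    rw [abs_mul]
    calc |b| * |t| ≤ (1/2) * (2/3) := mul_le_mul hb ht (abs_nonneg _) (by norm_num)
    _ = 1/3 := by norm_num
  have h4 : |e| ≤ |e + b * t| + |b * t| := by
    calc |e| = |(e + b * t) + (-(b * t))| := by ring_nf
    _ ≤ |e + b * t| + |(-(b * t))| := abs_add_le _ _
    _ = |e + b * t| + |b * t| := by rw [abs_neg]
  linarith [he]

lemma denom_ne {e b t : ℝ} (he : |e| = 2) (hb : |b| ≤ 1/2) (ht : |t| ≤ 2/3) :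
    e + b * t ≠ 0 := by
  have := denom_lb he hb ht
  intro h; rw [h] at this; simp at this; linarith

lemma inv_denom_bound {e b t : ℝ} (he : |e| = 2) (hb : |b| ≤ 1/2) (ht : |t| ≤ 2/3) :
    |1 / (e + b * t)| ≤ 2/3 := by
  have h := denom_lb he hb ht
  rw [abs_div, abs_one, div_le_iff₀ (by linarith)]
  linarith

lemma inv_sub_bound {e b t t' : ℝ} (he : |e| = 2) (hb : |b| ≤ 1/2)
    (ht : |t| ≤ 2/3) (ht' : |t'| ≤ 2/3) :
    |1 / (e + b * t) - 1 / (e + b * t')| ≤ (1/2) * |t - t'| := by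
  have hx := denom_lb he hb ht
  have hy := denom_lb he hb ht'
  have hxne := denom_ne he hb ht
  have hyne := denom_ne he hb ht'
  have key : 1 / (e + b * t) - 1 / (e + b * t') =
      (b * (t' - t)) / ((e + b * t) * (e + b * t')) := by
    field_simp; ring
  rw [key, abs_div, abs_mul, abs_mul]
  rw [div_le_iff₀ (by positivity)]
  have h1 : |b| * |t' - t| ≤ (1/2) * |t - t'| := by
    rw [abs_sub_comm]
    exact mul_le_mul_of_nonneg_right hb (abs_nonneg _)
  nlinarith [abs_nonneg (t - t'), abs_nonneg b, mul_le_mul hx hy (by linarith) (by linarith)]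

lemma inv_sub_bound' {e b t t' : ℝ} (he : |e| = 2) (hb : |b| ≤ 1/2)
    (ht : |t| ≤ 2/3) (ht' : |t'| ≤ 2/3) :
    |1 / (e + b * t) - 1 / (e + b * t')| ≤ (2/5) * |b| * |t - t'| := by
  have hx := denom_lb he hb ht
  have hy := denom_lb he hb ht'
  have hxne := denom_ne he hb ht
  have hyne := denom_ne he hb ht'
  have key : 1 / (e + b * t) - 1 / (e + b * t') =
      (b * (t' - t)) / ((e + b * t) * (e + b * t')) := by
    field_simp; ring
  rw [key, abs_div, abs_mul, abs_mul]
  rw [div_le_iff₀ (by positivity)]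
  rw [abs_sub_comm t' t]
  nlinarith [abs_nonneg (t - t'), abs_nonneg b, mul_le_mul hx hy (by linarith) (by linarith),
    mul_nonneg (abs_nonneg b) (abs_nonneg (t - t'))]

lemma rTrunc_bound {ε : ℤ → ℝ} (hε : ∀ n : ℤ, ε n = 1 ∨ ε n = -1) {b : ℝ}
    (hb : |b| ≤ 1/2) : ∀ k n, |rTrunc 2 b ε k n| ≤ 2/3 := by
  intro k
  induction k with
  | zero =>
    intro n
    have : |(2:ℝ) * ε n| = 2 := by rw [abs_mul, eps_abs hε]; norm_num
    simp only [rTrunc, abs_div, this, abs_one]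
    norm_num
  | succ k ih =>
    intro n
    show |1 / (2 * ε n + b * rTrunc 2 b ε k (n + 1))| ≤ 2/3
    exact inv_denom_bound (by rw [abs_mul, eps_abs hε]; norm_num) hb (ih _)

/-! ### The function ρ -/

noncomputable def rho (b : ℝ) : ℝ := -(1 + Real.sqrt (1 + b))⁻¹

lemma sqrt_lb {b : ℝ} (hb : |b| ≤ 1/2) : (7/10 : ℝ) ≤ Real.sqrt (1 + b) := by
  have h1 : (1/2 : ℝ) ≤ 1 + b := by
    have := abs_le.mp hb; linarith [this.1]
  have : (7/10 : ℝ) ^ 2 ≤ 1 + b := by nlinarith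
  nlinarith [Real.sq_sqrt (by linarith : (0:ℝ) ≤ 1 + b), Real.sqrt_nonneg (1+b)]

lemma rho_bound {b : ℝ} (hb : |b| ≤ 1/2) : |rho b| ≤ 2/3 := by
  have h := sqrt_lb hb
  have h2 : (17/10 : ℝ) ≤ 1 + Real.sqrt (1+b) := by linarith
  rw [rho, abs_neg, abs_inv, abs_of_pos (by linarith)]
  rw [inv_le_comm₀ (by linarith) (by norm_num)]
  linarith

lemma rho_denom {b : ℝ} (hb : |b| ≤ 1/2) :
    -2 + b * rho b = -(1 + Real.sqrt (1 + b)) := by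
  have h := sqrt_lb hb
  set u := Real.sqrt (1 + b) with hu
  have hu2 : u ^ 2 = 1 + b := Real.sq_sqrt (by
    have := abs_le.mp hb; linarith [this.1])
  have hne : 1 + u ≠ 0 := by linarith
  rw [rho, ← hu]
  have hb' : b = u ^ 2 - 1 := by linarith
  rw [hb']
  field_simp
  ring

lemma rho_fixed {b : ℝ} (hb : |b| ≤ 1/2) : rho b = 1 / (-2 + b * rho b) := by
  have h := sqrt_lb hb
  rw [rho_denom hb, rho, one_div, inv_neg]

lemma hasDerivAt_rho : HasDerivAt rho (1/8) 0 := by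
  have h1 : HasDerivAt (fun b : ℝ => 1 + b) 1 0 := by
    simpa using (hasDerivAt_id (0:ℝ)).const_add 1
  have h2 : HasDerivAt (fun b : ℝ => Real.sqrt (1 + b)) (1/2) 0 := by
    have := (Real.hasDerivAt_sqrt (by norm_num : (1:ℝ) + 0 ≠ 0)).comp 0 h1
    exact this.congr_deriv (by norm_num)
  have h3 : HasDerivAt (fun b : ℝ => 1 + Real.sqrt (1 + b)) (1/2) 0 := by
    simpa using h2.const_add 1
  have h4 : HasDerivAt (fun b : ℝ => (1 + Real.sqrt (1 + b))⁻¹) (-(1/8)) 0 := by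
    have := h3.inv (by norm_num)
    exact this.congr_deriv (by norm_num [Real.sqrt_one])
  exact h4.neg.congr_deriv (by norm_num)

lemma rho_zero : rho 0 = -(1/2) := by
  simp [rho, Real.sqrt_one]
  norm_num

/-! ### Values of rCF -/

section
variable {ε : ℤ → ℝ} {b : ℝ}

lemma rTrunc_dist (hε : ∀ n : ℤ, ε n = 1 ∨ ε n = -1)
    (hε1 : ∀ n : ℤ, 1 ≤ n → ε n = -1) (hb : |b| ≤ 1/2) :
    ∀ k, ∀ n : ℤ, 1 ≤ n → |rTrunc 2 b ε k n - rho b| ≤ 2 * (1/2)^k := by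
  intro k
  induction k with
  | zero =>
    intro n hn
    have h1 := rTrunc_bound hε hb 0 n
    have h2 := rho_bound hb
    calc |rTrunc 2 b ε 0 n - rho b| ≤ |rTrunc 2 b ε 0 n| + |rho b| := abs_sub _ _
    _ ≤ 2 * (1/2)^0 := by norm_num; linarith
  | succ k ih =>
    intro n hn
    have hne : ε n = -1 := hε1 n hn
    have hstep : rTrunc 2 b ε (k+1) n = 1 / (-2 + b * rTrunc 2 b ε k (n+1)) := by
      show (1 : ℝ) / (2 * ε n + _) = _
      rw [hne]; norm_num
    rw [hstep, rho_fixed hb]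
    have := inv_sub_bound (e := -2) (b := b) (by norm_num) hb
      (rTrunc_bound hε hb k (n+1)) (rho_bound hb)
    calc |1 / (-2 + b * rTrunc 2 b ε k (n+1)) - 1 / (-2 + b * rho b)|
        ≤ (1/2) * |rTrunc 2 b ε k (n+1) - rho b| := this
    _ ≤ (1/2) * (2 * (1/2)^k) := by
        have := ih (n+1) (by linarith)
        nlinarith [abs_nonneg (rTrunc 2 b ε k (n+1) - rho b)]
    _ = 2 * (1/2)^(k+1) := by ring

lemma tendsto_rTrunc_pos (hε : ∀ n : ℤ, ε n = 1 ∨ ε n = -1)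
    (hε1 : ∀ n : ℤ, 1 ≤ n → ε n = -1) (hb : |b| ≤ 1/2) {n : ℤ} (hn : 1 ≤ n) :
    Tendsto (fun k => rTrunc 2 b ε k n) atTop (𝓝 (rho b)) := by
  have h0 : Tendsto (fun k : ℕ => 2 * (1/2 : ℝ)^k) atTop (𝓝 0) := by
    simpa using (tendsto_pow_atTop_nhds_zero_of_lt_one (by norm_num : (0:ℝ) ≤ 1/2)
      (by norm_num)).const_mul 2
  have hsq : Tendsto (fun k => rTrunc 2 b ε k n - rho b) atTop (𝓝 0) :=
    squeeze_zero_norm (fun k => by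
      simpa [Real.norm_eq_abs] using rTrunc_dist hε hε1 hb k n hn) h0
  simpa using hsq.add (tendsto_const_nhds : Tendsto (fun _ : ℕ => rho b) atTop (𝓝 (rho b)))

lemma rCF_pos (hε : ∀ n : ℤ, ε n = 1 ∨ ε n = -1)
    (hε1 : ∀ n : ℤ, 1 ≤ n → ε n = -1) (hb : |b| ≤ 1/2) {n : ℤ} (hn : 1 ≤ n) :
    rCF 2 b ε n = rho b :=
  (tendsto_rTrunc_pos hε hε1 hb hn).limUnder_eq

lemma tendsto_rTrunc_zero (hε : ∀ n : ℤ, ε n = 1 ∨ ε n = -1) (hε0 : ε 0 = 1)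
    (hε1 : ∀ n : ℤ, 1 ≤ n → ε n = -1) (hb : |b| ≤ 1/2) :
    Tendsto (fun k => rTrunc 2 b ε k 0) atTop (𝓝 (1 / (2 + b * rho b))) := by
  have h1 : Tendsto (fun k => rTrunc 2 b ε k 1) atTop (𝓝 (rho b)) :=
    tendsto_rTrunc_pos hε hε1 hb le_rfl
  have hd : (2 : ℝ) + b * rho b ≠ 0 := denom_ne (by norm_num) hb (rho_bound hb)
  have h2 : Tendsto (fun k => 1 / (2 + b * rTrunc 2 b ε k 1)) atTop
      (𝓝 (1 / (2 + b * rho b))) := by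
    apply Tendsto.div tendsto_const_nhds _ hd
    exact ((h1.const_mul b).const_add 2)
  have h3 : Tendsto (fun k => rTrunc 2 b ε (k + 1) 0) atTop (𝓝 (1 / (2 + b * rho b))) := by
    have : ∀ k, rTrunc 2 b ε (k+1) 0 = 1 / (2 + b * rTrunc 2 b ε k 1) := by
      intro k
      show (1 : ℝ) / (2 * ε 0 + _) = _
      rw [hε0]; norm_num
    simpa [this] using h2
  exact (tendsto_add_atTop_iff_nat 1).mp h3

lemma rCF_zero (hε : ∀ n : ℤ, ε n = 1 ∨ ε n = -1) (hε0 : ε 0 = 1)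
    (hε1 : ∀ n : ℤ, 1 ≤ n → ε n = -1) (hb : |b| ≤ 1/2) :
    rCF 2 b ε 0 = 1 / (2 + b * rho b) :=
  (tendsto_rTrunc_zero hε hε0 hε1 hb).limUnder_eq

end

/-! ### Closed form and derivative of q -/

noncomputable def Qfun (b : ℝ) : ℝ := (2 + b * rho b)⁻¹ * (1 - -rho b)⁻¹

section
variable {ε : ℤ → ℝ} {b : ℝ}

lemma qFun_eq (hε : ∀ n : ℤ, ε n = 1 ∨ ε n = -1) (hε0 : ε 0 = 1)
    (hε1 : ∀ n : ℤ, 1 ≤ n → ε n = -1) (hb : |b| ≤ 1/2) :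
    qFun 2 b ε = Qfun b := by
  have hprod : ∀ n : ℕ, ∏ j ∈ Finset.range (n+1), rCF 2 b ε (j : ℤ)
      = (2 + b * rho b)⁻¹ * rho b ^ n := by
    intro n
    rw [Finset.prod_range_succ']
    have h0 : rCF 2 b ε ((0 : ℕ) : ℤ) = (2 + b * rho b)⁻¹ := by
      rw [show ((0:ℕ):ℤ) = 0 by norm_num, rCF_zero hε hε0 hε1 hb, one_div]
    have h1 : ∏ j ∈ Finset.range n, rCF 2 b ε ((j + 1 : ℕ) : ℤ) = rho b ^ n := by
      have hc : ∀ j ∈ Finset.range n, rCF 2 b ε ((j + 1 : ℕ) : ℤ) = rho b :=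
        fun j _ => rCF_pos hε hε1 hb (by push_cast; linarith)
      calc ∏ j ∈ Finset.range n, rCF 2 b ε ((j + 1 : ℕ) : ℤ)
          = ∏ _j ∈ Finset.range n, rho b := Finset.prod_congr rfl hc
      _ = rho b ^ n := by simp
    rw [h0, h1, mul_comm]
  have hterm : ∀ n : ℕ, (-1 : ℝ)^n * ∏ j ∈ Finset.range (n+1), rCF 2 b ε (j : ℤ)
      = (2 + b * rho b)⁻¹ * (-rho b) ^ n := by
    intro n
    rw [hprod n, neg_pow]
    ring
  rw [qFun, tsum_congr hterm, tsum_mul_left,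
    tsum_geometric_of_norm_lt_one (by
      rw [Real.norm_eq_abs, abs_neg]
      linarith [rho_bound hb] : ‖-rho b‖ < 1)]
  rfl

lemma hasDerivAt_Qfun : HasDerivAt Qfun 0 0 := by
  have hid : HasDerivAt (fun b : ℝ => b) 1 0 := hasDerivAt_id 0
  have hinner : HasDerivAt (fun b : ℝ => 2 + b * rho b) (-(1/2)) 0 := by
    have := (hid.mul hasDerivAt_rho).const_add 2
    exact this.congr_deriv (by rw [rho_zero]; norm_num)
  have h1 : HasDerivAt (fun b : ℝ => (2 + b * rho b)⁻¹) (1/8) 0 := by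
    have := hinner.inv (by norm_num [rho_zero])
    exact this.congr_deriv (by rw [rho_zero]; norm_num)
  have hinner2 : HasDerivAt (fun b : ℝ => 1 - -rho b) (1/8) 0 := by
    have := (hasDerivAt_rho.neg).const_sub 1
    simpa using this
  have h2 : HasDerivAt (fun b : ℝ => (1 - -rho b)⁻¹) (-(1/2)) 0 := by
    have := hinner2.inv (by norm_num [rho_zero])
    exact this.congr_deriv (by rw [rho_zero]; norm_num)
  have := h1.mul h2
  exact this.congr_deriv (by rw [rho_zero]; norm_num)

lemma hasDerivAt_qFun (hε : ∀ n : ℤ, ε n = 1 ∨ ε n = -1) (hε0 : ε 0 = 1)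
    (hε1 : ∀ n : ℤ, 1 ≤ n → ε n = -1) :
    HasDerivAt (fun b => qFun 2 b ε) 0 0 := by
  apply hasDerivAt_Qfun.congr_of_eventuallyEq
  have hball : ∀ᶠ x : ℝ in 𝓝 0, |x| ≤ 1/2 := by
    filter_upwards [Metric.ball_mem_nhds (0:ℝ) (by norm_num : (0:ℝ) < 1/2)] with x hx
    rw [Metric.mem_ball, Real.dist_eq, sub_zero] at hx
    linarith
  filter_upwards [hball] with x hx
  exact qFun_eq hε hε0 hε1 hx

/-! ### s-side estimates -/

lemma neg_eps_abs (hε : ∀ n : ℤ, ε n = 1 ∨ ε n = -1) (n : ℤ) : |(-(2 * ε n))| = 2 := by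
  rw [abs_neg, abs_mul, eps_abs hε]; norm_num

lemma sTrunc_bound (hε : ∀ n : ℤ, ε n = 1 ∨ ε n = -1) (hb : |b| ≤ 1/2) :
    ∀ k n, |sTrunc 2 b ε k n| ≤ 2/3 := by
  intro k
  induction k with
  | zero =>
    intro n
    show |1 / (-(2 * ε n))| ≤ 2/3
    rw [abs_div, abs_one, neg_eps_abs hε]
    norm_num
  | succ k ih =>
    intro n
    show |1 / (-(2 * ε n) + b * sTrunc 2 b ε k (n - 1))| ≤ 2/3
    exact inv_denom_bound (neg_eps_abs hε n) hb (ih _)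

lemma sTrunc_cauchy (hε : ∀ n : ℤ, ε n = 1 ∨ ε n = -1) (hb : |b| ≤ 1/2) :
    ∀ k n, |sTrunc 2 b ε (k+1) n - sTrunc 2 b ε k n| ≤ (4/3) * (1/2)^k := by
  intro k
  induction k with
  | zero =>
    intro n
    calc |sTrunc 2 b ε 1 n - sTrunc 2 b ε 0 n|
        ≤ |sTrunc 2 b ε 1 n| + |sTrunc 2 b ε 0 n| := abs_sub _ _
    _ ≤ (4/3) * (1/2)^0 := by
        have := sTrunc_bound hε hb 1 n
        have := sTrunc_bound hε hb 0 n
        norm_num; linarith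
  | succ k ih =>
    intro n
    have e1 : sTrunc 2 b ε (k+2) n = 1 / (-(2 * ε n) + b * sTrunc 2 b ε (k+1) (n-1)) := rfl
    have e2 : sTrunc 2 b ε (k+1) n = 1 / (-(2 * ε n) + b * sTrunc 2 b ε k (n-1)) := rfl
    rw [e1, e2]
    calc |1 / (-(2 * ε n) + b * sTrunc 2 b ε (k+1) (n-1))
          - 1 / (-(2 * ε n) + b * sTrunc 2 b ε k (n-1))|
        ≤ (1/2) * |sTrunc 2 b ε (k+1) (n-1) - sTrunc 2 b ε k (n-1)| :=
          inv_sub_bound (neg_eps_abs hε n) hb (sTrunc_bound hε hb _ _) (sTrunc_bound hε hb _ _)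
    _ ≤ (1/2) * ((4/3) * (1/2)^k) := by
        have := ih (n-1)
        nlinarith [abs_nonneg (sTrunc 2 b ε (k+1) (n-1) - sTrunc 2 b ε k (n-1))]
    _ = (4/3) * (1/2)^(k+1) := by ring

lemma tendsto_sTrunc (hε : ∀ n : ℤ, ε n = 1 ∨ ε n = -1) (hb : |b| ≤ 1/2) (n : ℤ) :
    Tendsto (fun k => sTrunc 2 b ε k n) atTop (𝓝 (sCF 2 b ε n)) := by
  have hc : CauchySeq (fun k => sTrunc 2 b ε k n) := by
    apply cauchySeq_of_le_geometric (r := 1/2) (C := 4/3) (by norm_num)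
    intro k
    rw [Real.dist_eq, abs_sub_comm]
    exact sTrunc_cauchy hε hb k n
  obtain ⟨L, hL⟩ := cauchySeq_tendsto_of_complete hc
  rw [sCF, hL.limUnder_eq]
  exact hL

lemma sCF_bound (hε : ∀ n : ℤ, ε n = 1 ∨ ε n = -1) (hb : |b| ≤ 1/2) (n : ℤ) :
    |sCF 2 b ε n| ≤ 2/3 :=
  le_of_tendsto' (tendsto_sTrunc hε hb n).abs (fun k => sTrunc_bound hε hb k n)

lemma sCF_near (hε : ∀ n : ℤ, ε n = 1 ∨ ε n = -1) (hb : |b| ≤ 1/2) (n : ℤ) :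
    |sCF 2 b ε n - 1 / (-(2 * ε n))| ≤ |b| / 2 := by
  have hstep : ∀ k, |sTrunc 2 b ε (k+1) n - 1 / (-(2 * ε n))| ≤ |b| / 2 := by
    intro k
    have e1 : sTrunc 2 b ε (k+1) n = 1 / (-(2 * ε n) + b * sTrunc 2 b ε k (n-1)) := rfl
    have e2 : (1 : ℝ) / (-(2 * ε n)) = 1 / (-(2 * ε n) + b * 0) := by norm_num
    rw [e1, e2]
    calc |1 / (-(2 * ε n) + b * sTrunc 2 b ε k (n-1)) - 1 / (-(2 * ε n) + b * 0)|
        ≤ (2/5) * |b| * |sTrunc 2 b ε k (n-1) - 0| :=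
          inv_sub_bound' (neg_eps_abs hε n) hb (sTrunc_bound hε hb _ _) (by norm_num)
    _ ≤ |b| / 2 := by
        rw [sub_zero]
        nlinarith [sTrunc_bound hε hb k (n-1), abs_nonneg b,
          abs_nonneg (sTrunc 2 b ε k (n-1))]
  have ht : Tendsto (fun k => |sTrunc 2 b ε (k+1) n - 1 / (-(2 * ε n))|) atTop
      (𝓝 |sCF 2 b ε n - 1 / (-(2 * ε n))|) := by
    have := ((tendsto_add_atTop_iff_nat 1).mpr (tendsto_sTrunc hε hb n)).sub
      (tendsto_const_nhds : Tendsto (fun _ : ℕ => 1 / (-(2 * ε n))) atTop _)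
    exact this.abs
  exact le_of_tendsto' ht hstep

/-! ### p-side estimates -/

lemma pTerm_bound (hε : ∀ n : ℤ, ε n = 1 ∨ ε n = -1) (hb : |b| ≤ 1/2) (k : ℕ) :
    |(-b) ^ k * ∏ j ∈ Finset.range k, sCF 2 b ε (-2 - (j : ℤ))| ≤ ((2/3) * |b|) ^ k := by
  rw [abs_mul, abs_pow, abs_neg]
  have h1 : |∏ j ∈ Finset.range k, sCF 2 b ε (-2 - (j : ℤ))| ≤ (2/3) ^ k := by
    rw [Finset.abs_prod]
    calc ∏ j ∈ Finset.range k, |sCF 2 b ε (-2 - (j : ℤ))|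
        ≤ ∏ _j ∈ Finset.range k, (2/3 : ℝ) :=
          Finset.prod_le_prod (fun j _ => abs_nonneg _) (fun j _ => sCF_bound hε hb _)
    _ = (2/3) ^ k := by simp [div_pow]
  calc |b| ^ k * |∏ j ∈ Finset.range k, sCF 2 b ε (-2 - (j : ℤ))|
      ≤ |b| ^ k * (2/3) ^ k :=
        mul_le_mul_of_nonneg_left h1 (by positivity)
  _ = ((2/3) * |b|) ^ k := by rw [← mul_pow]; ring_nf

lemma pTerm_summable (hε : ∀ n : ℤ, ε n = 1 ∨ ε n = -1) (hb : |b| ≤ 1/2) :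
    Summable (fun k : ℕ => (-b) ^ k * ∏ j ∈ Finset.range k, sCF 2 b ε (-2 - (j : ℤ))) := by
  apply Summable.of_norm_bounded (summable_geometric_of_lt_one (by positivity)
    (by nlinarith [abs_nonneg b] : (2/3) * |b| < 1))
  intro k
  rw [Real.norm_eq_abs]
  exact pTerm_bound hε hb k

lemma pFun_expand (hε : ∀ n : ℤ, ε n = 1 ∨ ε n = -1) (hb : |b| ≤ 1/2) :
    |pFun 2 b ε - (1 - b * sCF 2 b ε (-2))| ≤ (2/3) * b ^ 2 := by
  set f := fun k : ℕ => (-b) ^ k * ∏ j ∈ Finset.range k, sCF 2 b ε (-2 - (j : ℤ)) with hf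
  have hsum : Summable f := pTerm_summable hε hb
  have hsum1 : Summable (fun k => f (k + 1)) := by
    rwa [summable_nat_add_iff 1]
  have hsum2 : Summable (fun k => f (k + 2)) := by
    rwa [summable_nat_add_iff 2]
  have h0 : f 0 = 1 := by simp [hf]
  have h1 : f 1 = -b * sCF 2 b ε (-2) := by
    simp [hf]
  have hsplit : pFun 2 b ε = f 0 + (f 1 + ∑' k, f (k + 1 + 1)) := by
    rw [pFun, ← hf, Summable.tsum_eq_zero_add hsum, Summable.tsum_eq_zero_add hsum1]
  have htail : |∑' k, f (k + 2)| ≤ (2/3) * b ^ 2 := by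
    set r := (2/3) * |b| with hr
    have hr0 : 0 ≤ r := by positivity
    have hr1 : r ≤ 1/3 := by nlinarith [abs_nonneg b]
    have hb2 : ∀ k, ‖f (k + 2)‖ ≤ r ^ (k + 2) := fun k => by
      rw [Real.norm_eq_abs]; exact pTerm_bound hε hb (k + 2)
    have hsr : Summable (fun k : ℕ => r ^ (k + 2)) := by
      rw [summable_nat_add_iff 2]
      exact summable_geometric_of_lt_one hr0 (by linarith)
    calc |∑' k, f (k + 2)| ≤ ∑' k, r ^ (k + 2) := by
          rw [← Real.norm_eq_abs]
          exact norm_tsum_le_tsum_norm (by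
            apply Summable.of_nonneg_of_le (fun k => norm_nonneg _) hb2 hsr) |>.trans
            (Summable.tsum_le_tsum hb2 (by
              apply Summable.of_nonneg_of_le (fun k => norm_nonneg _) hb2 hsr) hsr)
    _ = r ^ 2 * (1 - r)⁻¹ := by
          have : ∀ k : ℕ, r ^ (k + 2) = r ^ 2 * r ^ k := fun k => by ring
          rw [tsum_congr this, tsum_mul_left, tsum_geometric_of_lt_one hr0 (by linarith)]
    _ ≤ (2/3) * b ^ 2 := by
          have hinv : (1 - r)⁻¹ ≤ 3/2 := by
            rw [inv_le_comm₀ (by linarith) (by norm_num)]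
            linarith
          have hr2 : r ^ 2 = (4/9) * b ^ 2 := by
            rw [hr]; rw [mul_pow, sq_abs]; ring
          nlinarith [sq_nonneg b]
  have hre : (∑' k, f (k + 1 + 1)) = ∑' k, f (k + 2) := tsum_congr (fun k => rfl)
  have : pFun 2 b ε - (1 - b * sCF 2 b ε (-2)) = ∑' k, f (k + 2) := by
    rw [hsplit, h0, h1, hre]; ring
  rw [this]
  exact htail

lemma pFun_at_zero : pFun 2 0 ε = 1 := by
  rw [pFun]
  rw [tsum_eq_single 0 (fun k hk => by
    rw [neg_zero, zero_pow hk, zero_mul])]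
  simp

lemma hasDerivAt_pFun (hε : ∀ n : ℤ, ε n = 1 ∨ ε n = -1) :
    HasDerivAt (fun b => pFun 2 b ε) (1 / (2 * ε (-2))) 0 := by
  rw [hasDerivAt_iff_tendsto_slope]
  set L : ℝ := 1 / (2 * ε (-2)) with hL
  have hLs : (1 : ℝ) / (-(2 * ε (-2))) = -L := by rw [hL, div_neg]
  have hbd : ∀ᶠ x in 𝓝[≠] (0:ℝ), |slope (fun b => pFun 2 b ε) 0 x - L| ≤ 2 * |x| := by
    have hball : ∀ᶠ x : ℝ in 𝓝[≠] 0, |x| ≤ 1/2 := by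
      apply Filter.Eventually.filter_mono nhdsWithin_le_nhds
      filter_upwards [Metric.ball_mem_nhds (0:ℝ) (by norm_num : (0:ℝ) < 1/2)] with x hx
      rw [Metric.mem_ball, Real.dist_eq, sub_zero] at hx
      linarith
    filter_upwards [hball, self_mem_nhdsWithin] with x hx hx0
    have hx0' : x ≠ 0 := hx0
    have key : |pFun 2 x ε - 1 - x * L| ≤ 2 * x ^ 2 := by
      have h1 := pFun_expand hε hx
      have h2 := sCF_near hε hx (-2 : ℤ)
      have hdecomp : pFun 2 x ε - 1 - x * L =
          (pFun 2 x ε - (1 - x * sCF 2 x ε (-2)))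
            - x * (sCF 2 x ε (-2) - 1 / (-(2 * ε (-2)))) := by
        rw [hLs]; ring
      rw [hdecomp]
      have h3 : |x * (sCF 2 x ε (-2) - 1 / (-(2 * ε (-2))))| ≤ |x| * (|x| / 2) := by
        rw [abs_mul]
        exact mul_le_mul_of_nonneg_left h2 (abs_nonneg _)
      calc |(pFun 2 x ε - (1 - x * sCF 2 x ε (-2)))
            - x * (sCF 2 x ε (-2) - 1 / (-(2 * ε (-2))))|
          ≤ |pFun 2 x ε - (1 - x * sCF 2 x ε (-2))|
            + |x * (sCF 2 x ε (-2) - 1 / (-(2 * ε (-2))))| := abs_sub _ _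
      _ ≤ 2 * x ^ 2 := by nlinarith [sq_abs x, sq_nonneg x]
    rw [slope_def_field, pFun_at_zero, sub_zero]
    have heq : (pFun 2 x ε - 1) / x - L = (pFun 2 x ε - 1 - x * L) / x := by
      field_simp
    rw [heq, abs_div, div_le_iff₀ (abs_pos.mpr hx0')]
    calc |pFun 2 x ε - 1 - x * L| ≤ 2 * x ^ 2 := key
    _ = 2 * |x| * |x| := by rw [← sq_abs]; ring
  have hg : Tendsto (fun x : ℝ => 2 * |x|) (𝓝[≠] (0:ℝ)) (𝓝 0) := by
    have : Tendsto (fun x : ℝ => 2 * |x|) (𝓝 0) (𝓝 0) := by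
      simpa using ((continuous_abs : Continuous fun x : ℝ => |x|).tendsto 0).const_mul 2
    exact this.mono_left nhdsWithin_le_nhds
  have hsq : Tendsto (fun x => slope (fun b => pFun 2 b ε) 0 x - L) (𝓝[≠] (0:ℝ)) (𝓝 0) := by
    apply squeeze_zero_norm' _ hg
    filter_upwards [hbd] with x hx
    rwa [Real.norm_eq_abs]
  simpa using hsq.add (tendsto_const_nhds : Tendsto (fun _ : ℝ => L) (𝓝[≠] (0:ℝ)) (𝓝 L))

end

theorem deriv_p_sub_q_at_two :
    ∀ ε : ℤ → ℝ, (∀ n : ℤ, ε n = 1 ∨ ε n = -1) →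
      ε 0 = 1 → (∀ n : ℤ, 1 ≤ n → ε n = -1) →
      HasDerivAt (fun b => pFun 2 b ε - qFun 2 b ε) (1 / (2 * ε (-2))) 0 := by
  intro ε hε hε0 hε1
  exact ((hasDerivAt_pFun hε).sub (hasDerivAt_qFun hε hε0 hε1)).congr_deriv (sub_zero _)
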